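/- arXiv:2503.11854 — 4 statements merged into one kernel-verified Lean document; each statement's English description precedes it below -/
import Mathlib

section
/- Let n ≥ 1 be an integer, C₁, C₂ ∈ ℝ, and let π(θ) = ‖θ‖₂^{2−n}(C₁‖θ‖₂ + C₂‖θ‖₂^{−1})² for θ ∈ ℝⁿ, θ ≠ 0. Then for every θ ∈ ℝⁿ with θ ≠ 0 and C₁‖θ‖₂ + C₂‖θ‖₂^{−1} ≠ 0, one has −‖∇π(θ)‖₂²/π(θ)² + 2·Δπ(θ)/π(θ) = (4n − n²)/‖θ‖₂². -/
open Real Filter Topology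

/-- The Laplacian of `g : ℝⁿ → ℝ` at a point: trace of the Hessian, computed as
the sum of second partial derivatives along the standard basis. -/
noncomputable def lap {n : ℕ} (g : EuclideanSpace ℝ (Fin n) → ℝ)
    (θ : EuclideanSpace ℝ (Fin n)) : ℝ :=
  ∑ i : Fin n, fderiv ℝ (fun x => fderiv ℝ g x (EuclideanSpace.single i 1)) θ
    (EuclideanSpace.single i 1)

/-- The weighting function π(θ) = ‖θ‖^(2−n) (C₁‖θ‖ + C₂‖θ‖⁻¹)². -/
noncomputable def piFun (n : ℕ) (C₁ C₂ : ℝ) (θ : EuclideanSpace ℝ (Fin n)) : ℝ :=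
  ‖θ‖ ^ ((2 : ℝ) - n) * (C₁ * ‖θ‖ + C₂ * ‖θ‖⁻¹) ^ 2

lemma sq_rpow' (x q : ℝ) (hx : 0 ≤ x) : (x ^ 2 : ℝ) ^ q = x ^ (2 * q) := by
  rw [← Real.rpow_natCast x 2, ← Real.rpow_mul hx]
  norm_num

section General
variable {E : Type*} [NormedAddCommGroup E] [InnerProductSpace ℝ E]

lemma myHasFDerivAt_norm_rpow (p : ℝ) {θ : E} (hθ : θ ≠ 0) :
    HasFDerivAt (fun x : E => ‖x‖ ^ p) ((p * ‖θ‖ ^ (p - 2)) • innerSL ℝ θ) θ := by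
  have hr : 0 < ‖θ‖ := norm_pos_iff.mpr hθ
  have h0 : (‖θ‖ : ℝ) ^ 2 ≠ 0 := by positivity
  have h := ((hasStrictFDerivAt_norm_sq θ).hasFDerivAt).rpow_const (p := p / 2) (Or.inl h0)
  have hfun : (fun x : E => ‖x‖ ^ p) = fun x : E => ((‖x‖ ^ 2 : ℝ)) ^ (p / 2) := by
    funext x
    rw [sq_rpow' _ _ (norm_nonneg x)]
    congr 1
    ring
  rw [hfun]
  convert h using 1
  rw [sq_rpow' _ _ hr.le]
  ext v
  simp [smul_smul]
  ring_nf

lemma hasFDerivAt_combo (a b c p1 p2 p3 : ℝ) {θ : E} (hθ : θ ≠ 0) :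
    HasFDerivAt (fun x : E => a * ‖x‖ ^ p1 + b * ‖x‖ ^ p2 + c * ‖x‖ ^ p3)
      ((a * (p1 * ‖θ‖ ^ (p1 - 2)) + b * (p2 * ‖θ‖ ^ (p2 - 2))
        + c * (p3 * ‖θ‖ ^ (p3 - 2))) • innerSL ℝ θ) θ := by
  have h := (((myHasFDerivAt_norm_rpow p1 hθ).const_mul a).add
    ((myHasFDerivAt_norm_rpow p2 hθ).const_mul b)).add
    ((myHasFDerivAt_norm_rpow p3 hθ).const_mul c)
  refine h.congr_fderiv ?_
  ext v
  simp [smul_smul]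
  ring

lemma gradient_of_hasFDerivAt_innerSL [CompleteSpace E] {f : E → ℝ} {K : ℝ} {θ : E}
    (h : HasFDerivAt f (K • innerSL ℝ θ) θ) : gradient f θ = K • θ := by
  have hg : HasGradientAt f (K • θ) θ := by
    rw [hasGradientAt_iff_hasFDerivAt]
    refine h.congr_fderiv ?_
    ext v
    simp [InnerProductSpace.toDual_apply_apply, inner_smul_left]
  exact hg.gradient

end General

lemma euclid_sum_sq {n : ℕ} (θ : EuclideanSpace ℝ (Fin n)) :
    ∑ i : Fin n, θ i ^ 2 = ‖θ‖ ^ 2 := by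
  rw [EuclideanSpace.norm_eq, Real.sq_sqrt (by positivity)]
  simp [sq_abs]

lemma lap_eventuallyEq {n : ℕ} {f g : EuclideanSpace ℝ (Fin n) → ℝ}
    {θ : EuclideanSpace ℝ (Fin n)} (h : f =ᶠ[𝓝 θ] g) : lap f θ = lap g θ := by
  unfold lap
  refine Finset.sum_congr rfl fun i _ => ?_
  have hev : (fun x => fderiv ℝ f x (EuclideanSpace.single i 1))
      =ᶠ[𝓝 θ] (fun x => fderiv ℝ g x (EuclideanSpace.single i 1)) := by
    filter_upwards [h.eventually_nhds] with x hx
    rw [Filter.EventuallyEq.fderiv_eq hx]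
  rw [hev.fderiv_eq]

lemma lap_combo {n : ℕ} (a b c p1 p2 p3 : ℝ) {θ : EuclideanSpace ℝ (Fin n)} (hθ : θ ≠ 0) :
    lap (fun x => a * ‖x‖ ^ p1 + b * ‖x‖ ^ p2 + c * ‖x‖ ^ p3) θ
      = n * (a * (p1 * ‖θ‖ ^ (p1 - 2)) + b * (p2 * ‖θ‖ ^ (p2 - 2))
          + c * (p3 * ‖θ‖ ^ (p3 - 2)))
        + ((a * p1) * ((p1 - 2) * ‖θ‖ ^ (p1 - 2 - 2)) + (b * p2) * ((p2 - 2) * ‖θ‖ ^ (p2 - 2 - 2))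
          + (c * p3) * ((p3 - 2) * ‖θ‖ ^ (p3 - 2 - 2))) * ‖θ‖ ^ 2 := by
  set k : EuclideanSpace ℝ (Fin n) → ℝ :=
    fun x => a * p1 * ‖x‖ ^ (p1 - 2) + b * p2 * ‖x‖ ^ (p2 - 2) + c * p3 * ‖x‖ ^ (p3 - 2) with hk
  set M : ℝ := (a * p1) * ((p1 - 2) * ‖θ‖ ^ (p1 - 2 - 2)) + (b * p2) * ((p2 - 2) * ‖θ‖ ^ (p2 - 2 - 2))
    + (c * p3) * ((p3 - 2) * ‖θ‖ ^ (p3 - 2 - 2)) with hM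
  have hopen : {x : EuclideanSpace ℝ (Fin n) | x ≠ 0} ∈ 𝓝 θ :=
    isOpen_compl_singleton.mem_nhds hθ
  have hterm : ∀ i : Fin n,
      fderiv ℝ (fun x => fderiv ℝ (fun x => a * ‖x‖ ^ p1 + b * ‖x‖ ^ p2 + c * ‖x‖ ^ p3) x
        (EuclideanSpace.single i 1)) θ (EuclideanSpace.single i 1)
      = k θ + M * (θ i) ^ 2 := by
    intro i
    set e : EuclideanSpace ℝ (Fin n) := EuclideanSpace.single i 1 with he
    have hev : (fun x => fderiv ℝ (fun x => a * ‖x‖ ^ p1 + b * ‖x‖ ^ p2 + c * ‖x‖ ^ p3) x e)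
        =ᶠ[𝓝 θ] (fun x => k x * (innerSL ℝ e) x) := by
      filter_upwards [hopen] with x hx
      rw [(hasFDerivAt_combo a b c p1 p2 p3 hx).fderiv]
      simp only [ContinuousLinearMap.smul_apply, innerSL_apply_apply, smul_eq_mul, hk]
      rw [real_inner_comm]
      ring
    have hkd : HasFDerivAt k (M • innerSL ℝ θ) θ := hasFDerivAt_combo (a*p1) (b*p2) (c*p3) _ _ _ hθ
    have hmul : HasFDerivAt (fun x => k x * (innerSL ℝ e) x) _ θ := hkd.mul (innerSL ℝ e).hasFDerivAt
    rw [hev.fderiv_eq, hmul.fderiv]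
    have h1 : (innerSL ℝ e) e = 1 := by
      simp [he, EuclideanSpace.inner_single_left]
    have h2 : (innerSL ℝ e) θ = θ i := by
      simp [he, EuclideanSpace.inner_single_left]
    have h3 : (innerSL ℝ θ) e = θ i := by
      simp [he, real_inner_comm, EuclideanSpace.inner_single_left, EuclideanSpace.inner_single_right]
    simp only [ContinuousLinearMap.add_apply, ContinuousLinearMap.smul_apply, smul_eq_mul,
      h1, h2, h3]
    ring
  unfold lap
  rw [Finset.sum_congr rfl (fun i _ => hterm i)]
  rw [Finset.sum_add_distrib, Finset.sum_const, ← Finset.mul_sum, euclid_sum_sq]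
  simp [hk]
  ring

theorem stmt0 (n : ℕ) (hn : 1 ≤ n) (C₁ C₂ : ℝ)
    (θ : EuclideanSpace ℝ (Fin n)) (hθ : θ ≠ 0)
    (hC : C₁ * ‖θ‖ + C₂ * ‖θ‖⁻¹ ≠ 0) :
    -‖gradient (piFun n C₁ C₂) θ‖ ^ 2 / (piFun n C₁ C₂ θ) ^ 2
      + 2 * lap (piFun n C₁ C₂) θ / piFun n C₁ C₂ θ
      = (4 * n - n ^ 2) / ‖θ‖ ^ 2 := by
  have hr : 0 < ‖θ‖ := norm_pos_iff.mpr hθ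
  set r := ‖θ‖ with hrdef
  have hr2 : r ^ (2 : ℝ) = r ^ 2 := by
    rw [← Real.rpow_natCast r 2]; norm_num
  have hr4 : r ^ (4 : ℝ) = r ^ 4 := by
    rw [← Real.rpow_natCast r 4]; norm_num
  have ht : 0 < r ^ (-(n : ℝ)) := Real.rpow_pos_of_pos hr _
  have hopen : {x : EuclideanSpace ℝ (Fin n) | x ≠ 0} ∈ 𝓝 θ :=
    isOpen_compl_singleton.mem_nhds hθ
  -- conversion lemmas for rpow exponents
  have c1 : r ^ ((4:ℝ) - n - 2) = r ^ (-(n:ℝ)) * r ^ 2 := by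
    rw [show (4:ℝ) - n - 2 = -(n:ℝ) + 2 by ring, Real.rpow_add hr, hr2]
  have c2 : r ^ ((2:ℝ) - n - 2) = r ^ (-(n:ℝ)) := by
    rw [show (2:ℝ) - n - 2 = -(n:ℝ) by ring]
  have hm2 : r ^ (-(2:ℝ)) = (r ^ 2)⁻¹ := by
    rw [Real.rpow_neg hr.le, hr2]
  have hm4 : r ^ (-(4:ℝ)) = (r ^ 4)⁻¹ := by
    rw [Real.rpow_neg hr.le, hr4]
  have c3 : r ^ (-(n:ℝ) - 2) = r ^ (-(n:ℝ)) / r ^ 2 := by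
    rw [show -(n:ℝ) - 2 = -(n:ℝ) + -(2:ℝ) by ring, Real.rpow_add hr, hm2, ← div_eq_mul_inv]
  have c4 : r ^ ((4:ℝ) - n - 2 - 2) = r ^ (-(n:ℝ)) := by
    rw [show (4:ℝ) - n - 2 - 2 = -(n:ℝ) by ring]
  have c5 : r ^ ((2:ℝ) - n - 2 - 2) = r ^ (-(n:ℝ)) / r ^ 2 := by
    rw [show (2:ℝ) - n - 2 - 2 = -(n:ℝ) - 2 by ring]; exact c3
  have c6 : r ^ (-(n:ℝ) - 2 - 2) = r ^ (-(n:ℝ)) / r ^ 4 := by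
    rw [show -(n:ℝ) - 2 - 2 = -(n:ℝ) + -(4:ℝ) by ring, Real.rpow_add hr, hm4, ← div_eq_mul_inv]
  -- value of piFun at θ
  have hA2 : C₁ * r ^ 2 + C₂ ≠ 0 := by
    intro h
    apply hC
    have : C₁ * r + C₂ * r⁻¹ = (C₁ * r ^ 2 + C₂) / r := by
      field_simp
    rw [this, h, zero_div]
  have hpival : piFun n C₁ C₂ θ = r ^ (-(n:ℝ)) * (C₁ * r ^ 2 + C₂) ^ 2 := by
    unfold piFun
    rw [show (2:ℝ) - n = -(n:ℝ) + 2 by ring, Real.rpow_add hr, hr2]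
    field_simp
    ring
  -- eventual expansion of piFun
  have heq : ∀ x : EuclideanSpace ℝ (Fin n), x ≠ 0 → piFun n C₁ C₂ x
      = C₁ ^ 2 * ‖x‖ ^ ((4:ℝ) - n) + (2 * C₁ * C₂) * ‖x‖ ^ ((2:ℝ) - n)
        + C₂ ^ 2 * ‖x‖ ^ (-(n:ℝ)) := by
    intro x hx
    have h : 0 < ‖x‖ := norm_pos_iff.mpr hx
    have h2 : ‖x‖ ^ (2 : ℝ) = ‖x‖ ^ 2 := by
      rw [← Real.rpow_natCast ‖x‖ 2]; norm_num
    have e4 : ‖x‖ ^ ((4:ℝ) - n) = ‖x‖ ^ ((2:ℝ) - n) * ‖x‖ ^ 2 := by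
      rw [show (4:ℝ) - n = ((2:ℝ) - n) + 2 by ring, Real.rpow_add h, h2]
    have e0 : ‖x‖ ^ (-(n:ℝ)) = ‖x‖ ^ ((2:ℝ) - n) / ‖x‖ ^ 2 := by
      have hm2x : ‖x‖ ^ (-(2:ℝ)) = (‖x‖ ^ 2)⁻¹ := by rw [Real.rpow_neg h.le, h2]
      rw [show -(n:ℝ) = ((2:ℝ) - n) + -(2:ℝ) by ring, Real.rpow_add h, hm2x, ← div_eq_mul_inv]
    unfold piFun
    rw [e4, e0]
    field_simp
    ring
  have hevf : piFun n C₁ C₂ =ᶠ[𝓝 θ] (fun x => C₁ ^ 2 * ‖x‖ ^ ((4:ℝ) - n)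
      + (2 * C₁ * C₂) * ‖x‖ ^ ((2:ℝ) - n) + C₂ ^ 2 * ‖x‖ ^ (-(n:ℝ))) := by
    filter_upwards [hopen] with x hx using heq x hx
  -- gradient
  have hFD := (hasFDerivAt_combo (C₁ ^ 2) (2 * C₁ * C₂) (C₂ ^ 2)
    ((4:ℝ) - n) ((2:ℝ) - n) (-(n:ℝ)) hθ).congr_of_eventuallyEq hevf
  have hgrad := gradient_of_hasFDerivAt_innerSL hFD
  have hgn : ‖gradient (piFun n C₁ C₂) θ‖ ^ 2
      = (C₁ ^ 2 * (((4:ℝ) - n) * r ^ ((4:ℝ) - n - 2))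
        + (2 * C₁ * C₂) * (((2:ℝ) - n) * r ^ ((2:ℝ) - n - 2))
        + C₂ ^ 2 * ((-(n:ℝ)) * r ^ (-(n:ℝ) - 2))) ^ 2 * r ^ 2 := by
    rw [hgrad, norm_smul, mul_pow, Real.norm_eq_abs, sq_abs]
  -- laplacian
  have hlap := (lap_eventuallyEq hevf).trans (lap_combo (C₁ ^ 2) (2 * C₁ * C₂) (C₂ ^ 2)
    ((4:ℝ) - n) ((2:ℝ) - n) (-(n:ℝ)) hθ)
  rw [hgn, hlap, hpival, c1, c2, c3, c4, c5, c6]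
  have hn4 : (0:ℝ) < n := by exact_mod_cast hn
  field_simp
  ring
end

section
/- Let n ≥ 1 be an integer, C₁, C₂ ∈ ℝ, and let π(θ) = ‖θ‖₂^{2−n}(C₁‖θ‖₂ + C₂‖θ‖₂^{−1})² for θ ∈ ℝⁿ, θ ≠ 0. Then for every θ ∈ ℝⁿ with θ ≠ 0 and C₁‖θ‖₂ + C₂‖θ‖₂^{−1} ≠ 0, one has ‖∇(log π)(θ)‖₂² + 2·Δ(log π)(θ) = (4n − n²)/‖θ‖₂². -/
open Real Filter


-- scalar profile and its derivatives
lemma hasDerivAt_F (n : ℕ) (C₁ C₂ : ℝ) (u : ℝ) (hu : u ≠ 0) (hv : C₁ * u + C₂ ≠ 0) :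
    HasDerivAt (fun u : ℝ => -(n / 2) * Real.log u + Real.log ((C₁ * u + C₂) ^ 2))
      (-(n / 2) * u⁻¹ + 2 * C₁ * (C₁ * u + C₂)⁻¹) u := by
  have h1 : HasDerivAt (fun u : ℝ => Real.log u) u⁻¹ u := Real.hasDerivAt_log hu
  have h2 : HasDerivAt (fun u : ℝ => (C₁ * u + C₂) ^ 2) (2 * (C₁ * u + C₂) * C₁) u := by
    have : HasDerivAt (fun u : ℝ => C₁ * u + C₂) C₁ u := by
      simpa using ((hasDerivAt_id u).const_mul C₁).add_const C₂
    simpa [mul_comm] using this.fun_pow 2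
  have h3 : HasDerivAt (fun u : ℝ => Real.log ((C₁ * u + C₂) ^ 2))
      (2 * (C₁ * u + C₂) * C₁ / (C₁ * u + C₂) ^ 2) u := h2.log (pow_ne_zero 2 hv)
  have := (h1.const_mul (-(n / 2 : ℝ))).add h3
  refine this.congr_deriv ?_
  field_simp

lemma hasDerivAt_F1 (n : ℕ) (C₁ C₂ : ℝ) (u : ℝ) (hu : u ≠ 0) (hv : C₁ * u + C₂ ≠ 0) :
    HasDerivAt (fun u : ℝ => -(n / 2) * u⁻¹ + 2 * C₁ * (C₁ * u + C₂)⁻¹)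
      ((n / 2) * (u⁻¹) ^ 2 - 2 * C₁ ^ 2 * ((C₁ * u + C₂)⁻¹) ^ 2) u := by
  have h1 : HasDerivAt (fun u : ℝ => u⁻¹) (-1 / u ^ 2) u := by
    simpa using (hasDerivAt_id u).fun_inv hu
  have hlin : HasDerivAt (fun u : ℝ => C₁ * u + C₂) C₁ u := by
    simpa using ((hasDerivAt_id u).const_mul C₁).add_const C₂
  have h2 : HasDerivAt (fun u : ℝ => (C₁ * u + C₂)⁻¹) (-C₁ / (C₁ * u + C₂) ^ 2) u :=
    hlin.inv hv
  have := (h1.const_mul (-(n / 2 : ℝ))).add (h2.const_mul (2 * C₁))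
  refine this.congr_deriv ?_
  field_simp
  ring

theorem stmt1 (n : ℕ) (hn : 1 ≤ n) (C₁ C₂ : ℝ)
    (θ : EuclideanSpace ℝ (Fin n)) (hθ : θ ≠ 0)
    (hC : C₁ * ‖θ‖ + C₂ * ‖θ‖⁻¹ ≠ 0) :
    ‖gradient (fun x => Real.log (piFun n C₁ C₂ x)) θ‖ ^ 2
      + 2 * lap (fun x => Real.log (piFun n C₁ C₂ x)) θ
      = (4 * n - n ^ 2) / ‖θ‖ ^ 2 := by
  classical
  set F : ℝ → ℝ := fun u => -(n / 2) * Real.log u + Real.log ((C₁ * u + C₂) ^ 2) with hF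
  set F₁ : ℝ → ℝ := fun u => -(n / 2) * u⁻¹ + 2 * C₁ * (C₁ * u + C₂)⁻¹ with hF₁
  set F₂ : ℝ → ℝ := fun u => (n / 2) * (u⁻¹) ^ 2 - 2 * C₁ ^ 2 * ((C₁ * u + C₂)⁻¹) ^ 2 with hF₂
  -- basic facts
  have hr : (0 : ℝ) < ‖θ‖ := norm_pos_iff.mpr hθ
  have hu0 : (0 : ℝ) < ‖θ‖ ^ 2 := by positivity
  have hvθ : C₁ * ‖θ‖ ^ 2 + C₂ ≠ 0 := by
    intro h
    apply hC
    have : C₁ * ‖θ‖ + C₂ * ‖θ‖⁻¹ = (C₁ * ‖θ‖ ^ 2 + C₂) / ‖θ‖ := by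
      field_simp
    rw [this, h, zero_div]
  -- the open set where things are nice
  set V : Set (EuclideanSpace ℝ (Fin n)) := {x | x ≠ 0 ∧ C₁ * ‖x‖ ^ 2 + C₂ ≠ 0} with hV
  have hVopen : IsOpen V := by
    have h1 : IsOpen {x : EuclideanSpace ℝ (Fin n) | x ≠ 0} := isOpen_compl_singleton
    have h2 : IsOpen {x : EuclideanSpace ℝ (Fin n) | C₁ * ‖x‖ ^ 2 + C₂ ≠ 0} := by
      have : Continuous fun x : EuclideanSpace ℝ (Fin n) => C₁ * ‖x‖ ^ 2 + C₂ := by continuity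
      exact isOpen_compl_singleton.preimage this
    exact h1.inter h2
  have hθV : θ ∈ V := ⟨hθ, hvθ⟩
  have hVnhds : V ∈ nhds θ := hVopen.mem_nhds hθV
  -- pointwise identity on V
  have hkey : ∀ x ∈ V, Real.log (piFun n C₁ C₂ x) = F (‖x‖ ^ 2) := by
    rintro x ⟨hx, hvx⟩
    have hrx : (0 : ℝ) < ‖x‖ := norm_pos_iff.mpr hx
    have hrne : ‖x‖ ≠ 0 := ne_of_gt hrx
    have hq : C₁ * ‖x‖ + C₂ * ‖x‖⁻¹ = (C₁ * ‖x‖ ^ 2 + C₂) / ‖x‖ := by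
      field_simp
    have hqne : C₁ * ‖x‖ + C₂ * ‖x‖⁻¹ ≠ 0 := by
      rw [hq]; exact div_ne_zero hvx hrne
    rw [piFun, Real.log_mul (by positivity) (pow_ne_zero 2 hqne),
      Real.log_rpow hrx, Real.log_pow, hq, Real.log_div hvx hrne, hF]
    simp only [Real.log_pow]
    push_cast
    ring
  have hEq : (fun x => Real.log (piFun n C₁ C₂ x)) =ᶠ[nhds θ] fun x => F (‖x‖ ^ 2) :=
    eventually_of_mem hVnhds hkey
  -- derivative of x ↦ ‖x‖^2
  have hnormsq : ∀ x : EuclideanSpace ℝ (Fin n), HasFDerivAt (fun y : EuclideanSpace ℝ (Fin n) => ‖y‖ ^ 2)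
      ((2 : ℝ) • (innerSL ℝ x)) x := by
    intro x
    have h := (hasFDerivAt_id x).inner ℝ (hasFDerivAt_id x)
    simp only [id] at h
    have h' : HasFDerivAt (fun y : EuclideanSpace ℝ (Fin n) => ‖y‖ ^ 2)
        ((fderivInnerCLM ℝ (x, x)).comp ((ContinuousLinearMap.id ℝ _).prod (ContinuousLinearMap.id ℝ _))) x := by
      refine h.congr_of_eventuallyEq (Filter.Eventually.of_forall fun y => ?_)
      exact (real_inner_self_eq_norm_sq y).symm
    refine h'.congr_fderiv ?_
    ext v
    simp [fderivInnerCLM_apply, real_inner_comm, two_mul]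
  -- first derivative of F ∘ ‖·‖²  on V
  have hfd : ∀ x ∈ V, HasFDerivAt (fun y : EuclideanSpace ℝ (Fin n) => F (‖y‖ ^ 2))
      (F₁ (‖x‖ ^ 2) • ((2 : ℝ) • (innerSL ℝ x))) x := by
    rintro x ⟨hx, hvx⟩
    have hrx : ‖x‖ ≠ 0 := norm_ne_zero_iff.mpr hx
    exact (hasDerivAt_F n C₁ C₂ (‖x‖ ^ 2) (pow_ne_zero 2 hrx) hvx).comp_hasFDerivAt x
      (hnormsq x)
  -- gradient computation
  have hgrad : gradient (fun x => Real.log (piFun n C₁ C₂ x)) θ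
      = (2 * F₁ (‖θ‖ ^ 2)) • θ := by
    have h1 : HasGradientAt (fun y : EuclideanSpace ℝ (Fin n) => F (‖y‖ ^ 2)) ((2 * F₁ (‖θ‖ ^ 2)) • θ) θ := by
      rw [hasGradientAt_iff_hasFDerivAt]
      refine (hfd θ hθV).congr_fderiv ?_
      ext v
      simp [real_inner_smul_left]
      ring
    have h2 : HasGradientAt (fun x => Real.log (piFun n C₁ C₂ x)) ((2 * F₁ (‖θ‖ ^ 2)) • θ) θ := by
      apply h1.congr_of_eventuallyEq hEq
    exact h2.gradient
  -- coordinate functions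
  have hcoord : ∀ (i : Fin n) (x : EuclideanSpace ℝ (Fin n)),
      HasFDerivAt (fun y : EuclideanSpace ℝ (Fin n) => y i)
        (innerSL ℝ (EuclideanSpace.single i (1 : ℝ))) x := by
    intro i x
    refine (innerSL ℝ (EuclideanSpace.single i (1 : ℝ))).hasFDerivAt.congr_of_eventuallyEq
      (Filter.Eventually.of_forall fun y => ?_)
    simp [EuclideanSpace.inner_single_left]
  -- each second-derivative term
  have hlapterm : ∀ i : Fin n,
      fderiv ℝ (fun x => fderiv ℝ (fun y => Real.log (piFun n C₁ C₂ y)) x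
          (EuclideanSpace.single i 1)) θ (EuclideanSpace.single i 1)
        = 4 * F₂ (‖θ‖ ^ 2) * (θ i) ^ 2 + 2 * F₁ (‖θ‖ ^ 2) := by
    intro i
    have hfd1 : ∀ x ∈ V, fderiv ℝ (fun y => Real.log (piFun n C₁ C₂ y)) x
        (EuclideanSpace.single i 1) = F₁ (‖x‖ ^ 2) * (2 * x i) := by
      intro x hx
      have h1 : fderiv ℝ (fun y => Real.log (piFun n C₁ C₂ y)) x
          = fderiv ℝ (fun y : EuclideanSpace ℝ (Fin n) => F (‖y‖ ^ 2)) x :=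
        Filter.EventuallyEq.fderiv_eq (eventually_of_mem (hVopen.mem_nhds hx) hkey)
      rw [h1, (hfd x hx).fderiv]
      simp [EuclideanSpace.inner_single_right]
    have hEv : (fun x => fderiv ℝ (fun y => Real.log (piFun n C₁ C₂ y)) x
        (EuclideanSpace.single i 1)) =ᶠ[nhds θ]
        (fun x => F₁ (‖x‖ ^ 2) * (2 * x i)) := eventually_of_mem hVnhds hfd1
    rw [hEv.fderiv_eq]
    have hrθ : ‖θ‖ ≠ 0 := ne_of_gt hr
    have hA : HasFDerivAt (fun x : EuclideanSpace ℝ (Fin n) => F₁ (‖x‖ ^ 2))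
        (F₂ (‖θ‖ ^ 2) • ((2 : ℝ) • (innerSL ℝ θ))) θ :=
      by have := (hasDerivAt_F1 n C₁ C₂ (‖θ‖ ^ 2) (pow_ne_zero 2 hrθ) hvθ).comp_hasFDerivAt θ (hnormsq θ); exact this
    have hB : HasFDerivAt (fun x : EuclideanSpace ℝ (Fin n) => 2 * x i)
        ((2 : ℝ) • innerSL ℝ (EuclideanSpace.single i (1 : ℝ))) θ := by
      simpa using (hcoord i θ).const_mul (2 : ℝ)
    have hAB := hA.fun_mul hB
    rw [hAB.fderiv]
    simp [EuclideanSpace.inner_single_right, EuclideanSpace.inner_single_left,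
      EuclideanSpace.single_apply]
    ring
  -- sum of squares of coordinates
  have hsum : ∑ i : Fin n, (θ i) ^ 2 = ‖θ‖ ^ 2 := by
    rw [EuclideanSpace.norm_sq_eq]
    simp [Real.norm_eq_abs, sq_abs]
  -- total Laplacian
  have hlap : lap (fun x => Real.log (piFun n C₁ C₂ x)) θ
      = 4 * F₂ (‖θ‖ ^ 2) * ‖θ‖ ^ 2 + 2 * n * F₁ (‖θ‖ ^ 2) := by
    rw [lap]
    calc (∑ i : Fin n, fderiv ℝ (fun x => fderiv ℝ (fun y => Real.log (piFun n C₁ C₂ y)) x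
          (EuclideanSpace.single i 1)) θ (EuclideanSpace.single i 1))
        = ∑ i : Fin n, (4 * F₂ (‖θ‖ ^ 2) * (θ i) ^ 2 + 2 * F₁ (‖θ‖ ^ 2)) :=
          Finset.sum_congr rfl fun i _ => hlapterm i
      _ = 4 * F₂ (‖θ‖ ^ 2) * (∑ i : Fin n, (θ i) ^ 2) + n * (2 * F₁ (‖θ‖ ^ 2)) := by
          rw [Finset.sum_add_distrib, ← Finset.mul_sum, Finset.sum_const]
          simp [mul_comm]
      _ = 4 * F₂ (‖θ‖ ^ 2) * ‖θ‖ ^ 2 + 2 * n * F₁ (‖θ‖ ^ 2) := by rw [hsum]; ring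
  -- finish
  rw [hgrad, hlap, norm_smul]
  have hrθ : ‖θ‖ ≠ 0 := ne_of_gt hr
  have hu : (‖θ‖ : ℝ) ^ 2 ≠ 0 := pow_ne_zero 2 hrθ
  rw [hF₁, hF₂]
  simp only [Real.norm_eq_abs, mul_pow, sq_abs]
  have hv2 : ‖θ‖ ^ 2 * C₁ + C₂ ≠ 0 := by rwa [mul_comm]
  field_simp
  ring
end

section
/- Let n ≥ 1 be an integer, C₁, C₂ ∈ ℝ, σ² > 0, and let π(θ) = ‖θ‖₂^{2−n}(C₁‖θ‖₂ + C₂‖θ‖₂^{−1})² and b(θ) = σ²·[2 − n + 2(C₁‖θ‖₂ − C₂‖θ‖₂^{−1})/(C₁‖θ‖₂ + C₂‖θ‖₂^{−1})]·θ/‖θ‖₂², both defined for θ ∈ ℝⁿ with θ ≠ 0 and C₁‖θ‖₂ + C₂‖θ‖₂^{−1} ≠ 0. Then at every such θ, b(θ) = σ²·∇(log π)(θ). -/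
/-- The bias correction term
b(θ) = σ²[2 − n + 2(C₁‖θ‖ − C₂‖θ‖⁻¹)/(C₁‖θ‖ + C₂‖θ‖⁻¹)]·θ/‖θ‖². -/
noncomputable def bFun (n : ℕ) (C₁ C₂ σ2 : ℝ) (θ : EuclideanSpace ℝ (Fin n)) :
    EuclideanSpace ℝ (Fin n) :=
  (σ2 * (2 - (n : ℝ)
      + 2 * (C₁ * ‖θ‖ - C₂ * ‖θ‖⁻¹) / (C₁ * ‖θ‖ + C₂ * ‖θ‖⁻¹)) / ‖θ‖ ^ 2) • θ

theorem stmt3 (n : ℕ) (hn : 1 ≤ n) (C₁ C₂ σ2 : ℝ) (hσ2 : 0 < σ2)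
    (θ : EuclideanSpace ℝ (Fin n)) (hθ : θ ≠ 0)
    (hC : C₁ * ‖θ‖ + C₂ * ‖θ‖⁻¹ ≠ 0) :
    bFun n C₁ C₂ σ2 θ = σ2 • gradient (fun x => Real.log (piFun n C₁ C₂ x)) θ := by
  have hr0 : 0 < ‖θ‖ := norm_pos_iff.mpr hθ
  have hr : ‖θ‖ ≠ 0 := hr0.ne'
  set r : ℝ := ‖θ‖ with hrdef
  set s : ℝ := r ^ 2 with hsdef
  have hs0 : 0 < s := by positivity
  have hs : s ≠ 0 := hs0.ne'
  set F : ℝ → ℝ := fun t =>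
    ((2 - (n : ℝ)) / 2) * Real.log t + Real.log (C₁^2 * t + 2 * C₁ * C₂ + C₂^2 * t⁻¹) with hF
  have hus : C₁^2 * s + 2 * C₁ * C₂ + C₂^2 * s⁻¹ = (C₁ * r + C₂ * r⁻¹)^2 := by
    field_simp [hsdef]; ring
  have hune : C₁^2 * s + 2 * C₁ * C₂ + C₂^2 * s⁻¹ ≠ 0 := by
    rw [hus]; exact pow_ne_zero _ hC
  set F' : ℝ := ((2 - (n : ℝ)) / 2) * s⁻¹
      + (C₁^2 + C₂^2 * (-(s^2)⁻¹)) / (C₁^2 * s + 2 * C₁ * C₂ + C₂^2 * s⁻¹) with hF'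
  have hFd : HasDerivAt F F' s := by
    have h1 : HasDerivAt (fun t : ℝ => ((2 - (n : ℝ)) / 2) * Real.log t)
        (((2 - (n : ℝ)) / 2) * s⁻¹) s := (Real.hasDerivAt_log hs).const_mul _
    have hu : HasDerivAt (fun t : ℝ => C₁^2 * t + 2 * C₁ * C₂ + C₂^2 * t⁻¹)
        (C₁^2 + C₂^2 * (-(s^2)⁻¹)) s := by
      have h0 := ((hasDerivAt_id s).const_mul (C₁^2)).add_const (2 * C₁ * C₂)
      have h2 := (hasDerivAt_inv hs).const_mul (C₂^2)
      exact (h0.add h2).congr_deriv (by ring)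
    exact h1.add (hu.log hune)
  have hsq : HasFDerivAt (fun x : EuclideanSpace ℝ (Fin n) => ‖x‖ ^ 2)
      (2 • (innerSL ℝ θ)) θ := by
    simpa using (hasFDerivAt_id θ).norm_sq
  have hcomp : HasFDerivAt (fun x : EuclideanSpace ℝ (Fin n) => F (‖x‖ ^ 2))
      (F' • (2 • (innerSL ℝ θ))) θ := by
    have := hFd.comp_hasFDerivAt (f := fun x : EuclideanSpace ℝ (Fin n) => ‖x‖ ^ 2) θ hsq
    exact this
  have heq : (fun x : EuclideanSpace ℝ (Fin n) => Real.log (piFun n C₁ C₂ x))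
      =ᶠ[nhds θ] (fun x => F (‖x‖ ^ 2)) := by
    have h1 : ∀ᶠ x : EuclideanSpace ℝ (Fin n) in nhds θ, x ≠ 0 :=
      isOpen_compl_singleton.eventually_mem hθ
    have hgc : ContinuousAt (fun x : EuclideanSpace ℝ (Fin n) =>
        C₁ * ‖x‖ + C₂ * ‖x‖⁻¹) θ := by
      apply ContinuousAt.add
      · exact (continuous_norm.continuousAt).const_mul _
      · exact ((continuous_norm.continuousAt).inv₀ hr).const_mul _
    have h2 : ∀ᶠ x : EuclideanSpace ℝ (Fin n) in nhds θ,
        C₁ * ‖x‖ + C₂ * ‖x‖⁻¹ ≠ 0 := hgc.eventually_ne hC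
    filter_upwards [h1, h2] with x hx hgx
    have hx0 : (0 : ℝ) < ‖x‖ := norm_pos_iff.mpr hx
    have hsq2 : (C₁ * ‖x‖ + C₂ * ‖x‖⁻¹)^2
        = C₁^2 * ‖x‖^2 + 2 * C₁ * C₂ + C₂^2 * (‖x‖^2)⁻¹ := by
      field_simp; ring
    have hrpow : (0:ℝ) < ‖x‖ ^ ((2 : ℝ) - n) := Real.rpow_pos_of_pos hx0 _
    simp only [piFun, hF]
    rw [Real.log_mul hrpow.ne' (pow_ne_zero _ hgx), Real.log_rpow hx0, hsq2,
      Real.log_pow]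
    push_cast
    ring
  have hgrad : HasGradientAt (fun x : EuclideanSpace ℝ (Fin n) =>
      Real.log (piFun n C₁ C₂ x)) ((2 * F') • θ) θ := by
    rw [hasGradientAt_iff_hasFDerivAt]
    have hdual : (InnerProductSpace.toDual ℝ (EuclideanSpace ℝ (Fin n))) ((2 * F') • θ)
        = F' • (2 • (innerSL ℝ θ)) := by
      ext v
      simp [real_inner_smul_left, two_smul]
      ring
    rw [hdual]
    exact hcomp.congr_of_eventuallyEq heq
  rw [hgrad.gradient, bFun, smul_smul]
  congr 1
  have hC' : C₁ * r ^ 2 + C₂ ≠ 0 := by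
    intro h
    apply hC
    have : C₁ * r + C₂ * r⁻¹ = (C₁ * r ^ 2 + C₂) * r⁻¹ := by field_simp
    rw [this, h, zero_mul]
  rw [hF', hus, hsdef]
  have hfac : C₁ * r + C₂ * r⁻¹ = (C₁ * r ^ 2 + C₂) * r⁻¹ := by field_simp
  rw [hfac]
  field_simp
  ring
end

section
/- Let n ≥ 1 be an integer, let f : (0, ∞) → ℝ be twice continuously differentiable, and let g(θ) = f(‖θ‖₂) for θ ∈ ℝⁿ, θ ≠ 0. Fix θ ≠ 0 with f(‖θ‖₂) ≠ 0 and set r = ‖θ‖₂. Then the identity −‖∇g(θ)‖₂²/g(θ)² + 2·Δg(θ)/g(θ) = (4n − n²)/r² holds if and only if f(r)f''(r) − (1/2)f'(r)² + ((n−1)/r)·f(r)f'(r) + ((n² − 4n)/(2r²))·f(r)² = 0. -/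
set_option maxHeartbeats 1600000 in
theorem stmt6 (n : ℕ) (hn : 1 ≤ n) (f : ℝ → ℝ)
    (hf : ContDiffOn ℝ 2 f (Set.Ioi 0))
    (g : EuclideanSpace ℝ (Fin n) → ℝ) (hg : ∀ θ, θ ≠ 0 → g θ = f ‖θ‖)
    (θ : EuclideanSpace ℝ (Fin n)) (hθ : θ ≠ 0)
    (r : ℝ) (hr : r = ‖θ‖) (hfr : f r ≠ 0) :
    (-‖gradient g θ‖ ^ 2 / (g θ) ^ 2 + 2 * lap g θ / g θ = (4 * n - n ^ 2) / r ^ 2)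
      ↔ (f r * deriv (deriv f) r - (1 / 2) * (deriv f r) ^ 2
          + (((n : ℝ) - 1) / r) * f r * deriv f r
          + (((n : ℝ) ^ 2 - 4 * n) / (2 * r ^ 2)) * (f r) ^ 2 = 0) := by
  have hrpos : 0 < r := by rw [hr]; exact norm_pos_iff.mpr hθ
  have hr0 : r ≠ 0 := ne_of_gt hrpos
  -- split regularity
  have h2 : ContDiffOn ℝ (1 + 1) f (Set.Ioi 0) := by
    have : ((2 : ℕ) : WithTop ℕ∞) = 1 + 1 := by norm_num
    rwa [← this]
  obtain ⟨hd1, -, hc1⟩ := (contDiffOn_succ_iff_deriv_of_isOpen isOpen_Ioi).1 h2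
  have hd2 : DifferentiableOn ℝ (deriv f) (Set.Ioi 0) := hc1.differentiableOn one_ne_zero
  have hfd : ∀ t : ℝ, 0 < t → HasDerivAt f (deriv f t) t := fun t ht =>
    (hd1.differentiableAt (isOpen_Ioi.mem_nhds ht)).hasDerivAt
  have hfd2 : HasDerivAt (deriv f) (deriv (deriv f) r) r :=
    (hd2.differentiableAt (isOpen_Ioi.mem_nhds hrpos)).hasDerivAt
  set a := deriv f r with ha
  set b := deriv (deriv f) r with hb
  -- the radial coefficient
  set c : EuclideanSpace ℝ (Fin n) → ℝ := fun x => deriv f (Real.sqrt (‖x‖ ^ 2)) / Real.sqrt (‖x‖ ^ 2) with hc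
  -- Claim 1: derivative of g at any nonzero point
  have claim1 : ∀ x : EuclideanSpace ℝ (Fin n), x ≠ 0 →
      HasFDerivAt g (c x • innerSL ℝ x) x := by
    intro x hx
    have hnx : (0:ℝ) < ‖x‖ := norm_pos_iff.mpr hx
    have hsq : Real.sqrt (‖x‖ ^ 2) = ‖x‖ := Real.sqrt_sq (norm_nonneg x)
    have hF : HasDerivAt (fun t => f (Real.sqrt t)) (deriv f ‖x‖ * (1 / (2 * ‖x‖))) (‖x‖ ^ 2) := by
      have h1 : HasDerivAt Real.sqrt (1 / (2 * Real.sqrt (‖x‖ ^ 2))) (‖x‖ ^ 2) :=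
        Real.hasDerivAt_sqrt (by positivity)
      have h2 := (hfd (Real.sqrt (‖x‖ ^ 2)) (by rw [hsq]; exact hnx)).comp (‖x‖ ^ 2) h1
      rw [hsq] at h2
      exact h2
    have hns : HasFDerivAt (fun y : EuclideanSpace ℝ (Fin n) => ‖y‖ ^ 2)
        ((2:ℝ) • innerSL ℝ x) x := by
      simpa [two_smul] using (hasStrictFDerivAt_norm_sq x).hasFDerivAt
    have hcomp := hF.comp_hasFDerivAt x hns
    have heq : g =ᶠ[nhds x] fun y => f (Real.sqrt (‖y‖ ^ 2)) := by
      filter_upwards [isOpen_compl_singleton.mem_nhds hx] with y hy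
      rw [hg y hy, Real.sqrt_sq (norm_nonneg y)]
    have : HasFDerivAt g ((deriv f ‖x‖ * (1 / (2 * ‖x‖))) • (2:ℝ) • innerSL ℝ x) x :=
      hcomp.congr_of_eventuallyEq heq
    convert this using 1
    rw [smul_smul]
    congr 1
    simp only [hc, hsq]
    field_simp
  -- gradient
  have hgrad : gradient g θ = c θ • θ := by
    refine HasGradientAt.gradient ?_
    rw [hasGradientAt_iff_hasFDerivAt]
    refine (claim1 θ hθ).congr_fderiv ?_
    ext y
    simp [InnerProductSpace.toDual_apply_apply, real_inner_smul_left]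
  have hcθ : c θ = a / r := by
    simp only [hc]
    rw [← hr, Real.sqrt_sq hrpos.le]
  have hgradnorm : ‖gradient g θ‖ ^ 2 = a ^ 2 := by
    rw [hgrad, norm_smul, hcθ, ← hr]
    rw [mul_pow]
    have : |a / r| ^ 2 = (a / r) ^ 2 := sq_abs _
    rw [Real.norm_eq_abs, this]
    field_simp
  -- Laplacian
  have hs : ‖θ‖ ^ 2 = r ^ 2 := by rw [hr]
  -- derivative of the scalar function G t = deriv f (sqrt t) / sqrt t at r ^ 2
  have hG : HasDerivAt (fun t : ℝ => deriv f (Real.sqrt t) / Real.sqrt t)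
      (b / (2 * r ^ 2) - a / (2 * r ^ 3)) (r ^ 2) := by
    have hsq : Real.sqrt (r ^ 2) = r := Real.sqrt_sq hrpos.le
    have h1 : HasDerivAt Real.sqrt (1 / (2 * r)) (r ^ 2) := by
      have := Real.hasDerivAt_sqrt (x := r ^ 2) (by positivity)
      simpa [hsq] using this
    have hfd2' : HasDerivAt (deriv f) b (Real.sqrt (r ^ 2)) := by rw [hsq]; exact hfd2
    have h2 : HasDerivAt (fun t => deriv f (Real.sqrt t)) (b * (1 / (2 * r))) (r ^ 2) :=
      hfd2'.comp (r ^ 2) h1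
    have h3 : HasDerivAt (fun t : ℝ => (Real.sqrt t)⁻¹)
        (-(1 / (2 * r)) / (Real.sqrt (r ^ 2)) ^ 2) (r ^ 2) :=
      h1.inv (by rw [hsq]; exact hr0)
    have h4 := h2.fun_mul h3
    have : (fun t : ℝ => deriv f (Real.sqrt t) * (Real.sqrt t)⁻¹)
        = fun t : ℝ => deriv f (Real.sqrt t) / Real.sqrt t := by
      funext t; rw [div_eq_mul_inv]
    rw [this] at h4
    refine h4.congr_deriv ?_
    rw [hsq]
    field_simp
    ring
  -- the function c has an fderiv at θ
  have hcd : HasFDerivAt c ((2 * (b / (2 * r ^ 2) - a / (2 * r ^ 3))) • innerSL ℝ θ) θ := by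
    have hns : HasFDerivAt (fun y : EuclideanSpace ℝ (Fin n) => ‖y‖ ^ 2)
        ((2:ℝ) • innerSL ℝ θ) θ := by
      simpa [two_smul] using (hasStrictFDerivAt_norm_sq θ).hasFDerivAt
    have hG' : HasDerivAt (fun t : ℝ => deriv f (Real.sqrt t) / Real.sqrt t)
        (b / (2 * r ^ 2) - a / (2 * r ^ 3)) (‖θ‖ ^ 2) := by rw [hs]; exact hG
    have := hG'.comp_hasFDerivAt θ hns
    refine this.congr_fderiv ?_
    rw [smul_smul]
    ring_nf
  set β := b / (2 * r ^ 2) - a / (2 * r ^ 3) with hβ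
  have hlap : lap g θ = n * (a / r) + 2 * β * r ^ 2 := by
    unfold lap
    have key : ∀ i : Fin n,
        fderiv ℝ (fun x => fderiv ℝ g x (EuclideanSpace.single i 1)) θ
          (EuclideanSpace.single i 1) = a / r + 2 * β * (θ i) ^ 2 := by
      intro i
      have heqi : (fun x => fderiv ℝ g x (EuclideanSpace.single i 1))
          =ᶠ[nhds θ] fun x => c x * x i := by
        filter_upwards [isOpen_compl_singleton.mem_nhds hθ] with y hy
        rw [(claim1 y hy).fderiv]
        simp [real_inner_smul_left, EuclideanSpace.inner_single_right]
      rw [heqi.fderiv_eq]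
      -- product rule
      have hproj : HasFDerivAt (fun x : EuclideanSpace ℝ (Fin n) => x i)
          (EuclideanSpace.proj i : EuclideanSpace ℝ (Fin n) →L[ℝ] ℝ) θ :=
        (EuclideanSpace.proj i : EuclideanSpace ℝ (Fin n) →L[ℝ] ℝ).hasFDerivAt
      have hmul := hcd.fun_mul hproj
      rw [hmul.fderiv]
      simp only [ContinuousLinearMap.add_apply, ContinuousLinearMap.smul_apply,
        ContinuousLinearMap.coe_smul', Pi.smul_apply]
      have h1 : (innerSL ℝ θ) (EuclideanSpace.single i 1) = θ i := by
        simp [EuclideanSpace.inner_single_right]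
      have h2 : (EuclideanSpace.proj i : EuclideanSpace ℝ (Fin n) →L[ℝ] ℝ)
          (EuclideanSpace.single i 1) = 1 := by
        simp
      rw [h1, h2, hcθ]
      simp only [smul_eq_mul]
      ring
    rw [Finset.sum_congr rfl fun i _ => key i]
    rw [Finset.sum_add_distrib, Finset.sum_const, Finset.card_univ, Fintype.card_fin]
    have hsum : ∑ i : Fin n, (θ i) ^ 2 = r ^ 2 := by
      have h := real_inner_self_eq_norm_sq θ
      rw [hr, ← h, PiLp.inner_apply]
      simp [RCLike.inner_apply, sq]
    rw [← Finset.mul_sum, hsum]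
    push_cast
    ring
  -- now pure algebra
  have hgθ : g θ = f r := by rw [hg θ hθ, hr]
  rw [hgθ, hgradnorm, hlap]
  have h2βr : 2 * β * r ^ 2 = b - a / r := by
    rw [hβ]; field_simp
  rw [h2βr]
  have hF2 : (f r) ^ 2 ≠ 0 := pow_ne_zero 2 hfr
  have hkey : f r * b - (1 / 2) * a ^ 2 + (((n : ℝ) - 1) / r) * f r * a
      + (((n : ℝ) ^ 2 - 4 * n) / (2 * r ^ 2)) * (f r) ^ 2
      = ((f r) ^ 2 / 2) * ((-a ^ 2 / (f r) ^ 2 + 2 * ((n : ℝ) * (a / r) + (b - a / r)) / f r)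
          - (4 * (n : ℝ) - (n : ℝ) ^ 2) / r ^ 2) := by
    field_simp
    ring
  constructor
  · intro h
    rw [hkey, h, sub_self, mul_zero]
  · intro h
    rw [hkey] at h
    rcases mul_eq_zero.1 h with h' | h'
    · exact absurd h' (by positivity)
    · linarith [sub_eq_zero.1 h']
end
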